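/- Let Ḡ be an orientation of a finite undirected simple graph G=(V,E) satisfying Invariant 1, let {u,v} ∉ E with odeg(u,Ḡ) ≤ odeg(v,Ḡ), let G̃ be the orientation of G + {u,v} obtained from Ḡ by adding the directed edge (u,v), let P be an improving path in G̃ starting at u, let Ḡ' be the orientation obtained from G̃ by flipping P, and let P_f be the inverse (flipped) path of P in Ḡ'. Then every improving path in Ḡ' shares at least one vertex with P_f. -/

import Mathlib

open Finset

/-- An orientation of a simple graph `G`: a choice, for each edge `{u,v}` of `G`,
of exactly one of the directed edges `(u,v)`, `(v,u)`. -/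
structure GraphOrientation {V : Type*} (G : SimpleGraph V) where
  dir : V → V → Bool
  dir_adj : ∀ u v, dir u v = true → G.Adj u v
  exactly_one : ∀ u v, G.Adj u v → (dir u v = true ↔ ¬ dir v u = true)

/-- Out-degree of `v` w.r.t. a directed-edge relation `d`. -/
def outDegF {V : Type*} [Fintype V] (d : V → V → Bool) (v : V) : ℕ :=
  (Finset.univ.filter fun w => d v w = true).card

/-- Out-degree of a vertex in an orientation. -/
def GraphOrientation.outDeg {V : Type*} [Fintype V] {G : SimpleGraph V}
    (o : GraphOrientation G) (v : V) : ℕ := outDegF o.dir v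

/-- Maximum out-degree `Δ` of an orientation. -/
def GraphOrientation.maxOutDeg {V : Type*} [Fintype V] {G : SimpleGraph V}
    (o : GraphOrientation G) : ℕ := Finset.univ.sup o.outDeg

/-- `|E(S)|`: the number of edges of `G` with both endpoints in `S`. -/
def edgeCount {V : Type*} [Fintype V] [DecidableEq V] (G : SimpleGraph V)
    [DecidableRel G.Adj] (S : Finset V) : ℕ :=
  (G.edgeFinset.filter fun e => ∀ x ∈ e, x ∈ S).card

/-- A directed path in an orientation: a list of distinct vertices, of length at
least two (i.e. `k ≥ 1` edges), with consecutive vertices joined by directed edges. -/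
def IsDirPath {V : Type*} {G : SimpleGraph V} (o : GraphOrientation G) (p : List V) : Prop :=
  p.Nodup ∧ 2 ≤ p.length ∧ List.Chain' (fun a b => o.dir a b = true) p

/-- A directed path from `a` to `b`. -/
def IsPathFrom {V : Type*} {G : SimpleGraph V} (o : GraphOrientation G)
    (p : List V) (a b : V) : Prop :=
  IsDirPath o p ∧ p.head? = some a ∧ p.getLast? = some b

/-- Invariant 1: there is no improving path between any two vertices, i.e. no directed
path `⟨a,…,b⟩` with `odeg(a) > odeg(b) + 1`. -/
def Invariant1 {V : Type*} [Fintype V] {G : SimpleGraph V} (o : GraphOrientation G) : Prop :=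
  ∀ p a b, IsPathFrom o p a b → o.outDeg a ≤ o.outDeg b + 1

/-- Invariant 2: there is no improving path starting at a vertex of maximum out-degree. -/
def Invariant2 {V : Type*} [Fintype V] {G : SimpleGraph V} (o : GraphOrientation G) : Prop :=
  ∀ p a b, IsPathFrom o p a b → o.outDeg a = o.maxOutDeg → o.outDeg a ≤ o.outDeg b + 1

/-- Flipping the directed path `p`: every directed edge `(v_i, v_{i+1})` of `p`
is replaced by the reversed edge `(v_{i+1}, v_i)`; all other edges are unchanged. -/
def flipDir {V : Type*} [DecidableEq V] (d : V → V → Bool) (p : List V) : V → V → Bool :=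
  fun a b => if (a, b) ∈ p.zip p.tail ∨ (b, a) ∈ p.zip p.tail then d b a else d a b

/-- `G + {u,v}`: the graph obtained from `G` by inserting the edge `{u,v}`. -/
def addE {V : Type*} (G : SimpleGraph V) (u v : V) : SimpleGraph V :=
  G ⊔ SimpleGraph.fromEdgeSet {s(u, v)}

/-- `G − {u,v}`: the graph obtained from `G` by deleting the edge `{u,v}`. -/
def delE {V : Type*} (G : SimpleGraph V) (u v : V) : SimpleGraph V :=
  G.deleteEdges {s(u, v)}

/-- After inserting `{u,v}` (directed `(u,v)`) into an Invariant-1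
orientation and flipping an improving path `P` starting at `u`, every improving path
in the resulting orientation `Ḡ'` shares at least one vertex with the inverse path
`P_f` (the reversal of `P`). -/
theorem insert_flip_shares_vertex {V : Type*} [Fintype V] [DecidableEq V]
    {G : SimpleGraph V} (o : GraphOrientation G) (hinv : Invariant1 o)
    (u v : V) (hne : u ≠ v) (hE : ¬ G.Adj u v) (hdeg : o.outDeg u ≤ o.outDeg v)
    (ot : GraphOrientation (addE G u v))
    (hot : ∀ a b, ot.dir a b = true ↔ (o.dir a b = true ∨ (a = u ∧ b = v)))
    (P : List V) (w : V) (hP : IsPathFrom ot P u w)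
    (himp : ot.outDeg w + 1 < ot.outDeg u)
    (o' : GraphOrientation (addE G u v)) (ho' : o'.dir = flipDir ot.dir P) :
    ∀ q x y, IsPathFrom o' q x y → o'.outDeg y + 1 < o'.outDeg x →
      ∃ z, z ∈ q ∧ z ∈ P.reverse := by
  intro q x y hq himpq
  by_contra hcon
  push_neg at hcon
  have hnotP : ∀ z ∈ q, z ∉ P := fun z hz hzP => hcon z hz (List.mem_reverse.mpr hzP)
  have huP : u ∈ P := List.mem_of_mem_head? hP.2.1
  have key : ∀ a, a ∉ P → ∀ b, (o'.dir a b = true ↔ o.dir a b = true) := by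
    intro a ha b
    have h1 : o'.dir a b = ot.dir a b := by
      rw [ho']
      unfold flipDir
      rw [if_neg]
      rintro (h | h)
      · exact ha (List.of_mem_zip h).1
      · exact ha (List.mem_of_mem_tail (List.of_mem_zip h).2)
    rw [h1, hot]
    constructor
    · rintro (h | ⟨rfl, rfl⟩)
      · exact h
      · exact absurd huP ha
    · exact Or.inl
  have hdegeq : ∀ a, a ∉ P → o'.outDeg a = o.outDeg a := by
    intro a ha
    unfold GraphOrientation.outDeg outDegF
    congr 1
    apply Finset.filter_congr
    intro b _
    simpa using key a ha b
  obtain ⟨⟨hnd, hlen, hchain⟩, hqh, hql⟩ := hq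
  have hchain' : ∀ (l : List V), (∀ z ∈ l, z ∉ P) →
      List.Chain' (fun a b => o'.dir a b = true) l →
      List.Chain' (fun a b => o.dir a b = true) l := by
    intro l
    induction l with
    | nil => intro _ _; exact List.isChain_nil
    | cons a t ih =>
      intro hl hc
      cases t with
      | nil => exact List.isChain_singleton a
      | cons b t' =>
        unfold List.Chain' at hc ⊢
        rw [List.isChain_cons_cons] at hc ⊢
        exact ⟨(key a (hl a (by simp)) b).1 hc.1,
          ih (fun z hz => hl z (by simp [hz])) hc.2⟩
  have hqpath : IsPathFrom o q x y :=
    ⟨⟨hnd, hlen, hchain' q hnotP hchain⟩, hqh, hql⟩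
  have hx : x ∈ q := List.mem_of_mem_head? hqh
  have hy : y ∈ q := List.mem_of_mem_getLast? hql
  have h1 := hinv q x y hqpath
  rw [hdegeq x (hnotP x hx), hdegeq y (hnotP y hy)] at himpq
  omega
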